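/- arXiv:2503.08214 — 5 statements merged into one kernel-verified Lean document; each statement's English description precedes it below -/
import Mathlib

section
/- Let h : ℝⁿ → ℝ be continuously differentiable and x : [0,∞) → ℝⁿ a C¹ trajectory satisfying d/dt h(x(t)) ≥ -α·h(x(t)) - γ for constants α > 0 and γ ≥ 0. If h(x(0)) ≥ -γ/α, then h(x(t)) ≥ -γ/α for all t ≥ 0, i.e., the inflated set S_δ = {x | h(x) + γ/α ≥ 0} is forward invariant. -/
theorem stmt_1 {n : ℕ} (h : EuclideanSpace ℝ (Fin n) → ℝ) (hh : ContDiff ℝ 1 h)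
    (x : ℝ → EuclideanSpace ℝ (Fin n)) (hx : ContDiff ℝ 1 x)
    (α γ : ℝ) (hα : 0 < α) (hγ : 0 ≤ γ)
    (hineq : ∀ t : ℝ, 0 ≤ t → -α * h (x t) - γ ≤ deriv (fun s => h (x s)) t)
    (h0 : -(γ / α) ≤ h (x 0)) :
    ∀ t : ℝ, 0 ≤ t → -(γ / α) ≤ h (x t) := by
  intro t ht
  set φ : ℝ → ℝ := fun s => h (x s) with hφ
  have hφd : Differentiable ℝ φ := (hh.comp hx).differentiable one_ne_zero
  set f : ℝ → ℝ := fun s => (φ s + γ / α) * Real.exp (α * s) with hfdef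
  have hfd : ∀ s : ℝ, HasDerivAt f
      ((deriv φ s + (φ s + γ / α) * α) * Real.exp (α * s)) s := by
    intro s
    have he : HasDerivAt (fun s : ℝ => Real.exp (α * s)) (α * Real.exp (α * s)) s := by
      have := ((hasDerivAt_id s).const_mul α).exp
      simpa [mul_comm] using this
    have : HasDerivAt (fun y => (φ y + γ / α) * Real.exp (α * y)) _ s :=
      ((hφd s).hasDerivAt.add_const (γ / α)).mul he
    convert this using 1
    ring
  have hmono : MonotoneOn f (Set.Ici (0 : ℝ)) := by
    apply monotoneOn_of_deriv_nonneg (convex_Ici 0)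
    · exact (((hφd.continuous.add continuous_const).mul
        (Real.continuous_exp.comp (continuous_const.mul continuous_id))).continuousOn)
    · intro s _
      exact (hfd s).differentiableAt.differentiableWithinAt
    · intro s hs
      rw [interior_Ici] at hs
      rw [(hfd s).deriv]
      have h1 := hineq s hs.le
      have h2 : (0 : ℝ) < Real.exp (α * s) := Real.exp_pos _
      have h3 : (γ / α) * α = γ := div_mul_cancel₀ γ hα.ne'
      nlinarith
  have hft : f 0 ≤ f t := hmono Set.self_mem_Ici (Set.mem_Ici.2 ht) ht
  have hf0 : 0 ≤ f 0 := by
    simp only [hfdef, mul_zero, Real.exp_zero, mul_one]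
    linarith
  have h2 : (0 : ℝ) < Real.exp (α * t) := Real.exp_pos _
  have : 0 ≤ φ t + γ / α := by
    by_contra hc
    push_neg at hc
    have : f t < 0 := mul_neg_of_neg_of_pos hc h2
    linarith
  linarith [this]
end

section
/- Let P₁, …, P_k ∈ ℝ³ and r₁, …, r_k > 0, and define S_n = {x ∈ ℝ³ | ‖x - P_n‖ ≥ r_n} and S* = ⋂ₙ S_n. If a C¹ trajectory x(t) (with x(t) ≠ P_n for all t, n) satisfies ⟨(x(t) - P_n)/‖x(t) - P_n‖, ẋ(t)⟩ ≥ -α·(‖x(t) - P_n‖ - r_n) for every n and every t, and x(0) ∈ S*, then x(t) ∈ S* for all t ≥ 0. -/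
open scoped RealInnerProductSpace

theorem stmt_7 (k : ℕ) (P : Fin k → EuclideanSpace ℝ (Fin 3)) (r : Fin k → ℝ)
    (hr : ∀ n, 0 < r n) (α : ℝ) (hα : 0 < α)
    (x : ℝ → EuclideanSpace ℝ (Fin 3)) (x' : ℝ → EuclideanSpace ℝ (Fin 3))
    (hx : ∀ t : ℝ, HasDerivAt x (x' t) t) (hx' : Continuous x')
    (hne : ∀ t : ℝ, ∀ n, x t ≠ P n)
    (hineq : ∀ t : ℝ, 0 ≤ t → ∀ n,
      -α * (‖x t - P n‖ - r n) ≤ ⟪(‖x t - P n‖⁻¹ • (x t - P n)), x' t⟫)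
    (h0 : x 0 ∈ ⋂ n, {y : EuclideanSpace ℝ (Fin 3) | r n ≤ ‖y - P n‖}) :
    ∀ t : ℝ, 0 ≤ t → x t ∈ ⋂ n, {y : EuclideanSpace ℝ (Fin 3) | r n ≤ ‖y - P n‖} := by
  intro t ht
  rw [Set.mem_iInter]
  intro n
  simp only [Set.mem_iInter, Set.mem_setOf_eq] at h0
  -- N s = ‖x s - P n‖
  set N : ℝ → ℝ := fun s => ‖x s - P n‖ with hNdef
  have hNpos : ∀ s, 0 < N s := fun s => by
    simpa [hNdef, sub_eq_zero] using (hne s n)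
  -- derivative of N
  have hN : ∀ s, HasDerivAt N (⟪(N s)⁻¹ • (x s - P n), x' s⟫) s := by
    intro s
    have hv : HasDerivAt (fun u => x u - P n) (x' s) s := (hx s).sub_const _
    have h2 : HasDerivAt (fun u => ‖x u - P n‖ ^ 2) (2 * ⟪x s - P n, x' s⟫) s := hv.norm_sq
    have hsq : HasDerivAt (fun u => Real.sqrt (‖x u - P n‖ ^ 2))
        (1 / (2 * Real.sqrt (‖x s - P n‖ ^ 2)) * (2 * ⟪x s - P n, x' s⟫)) s := by
      exact (Real.hasDerivAt_sqrt (pow_ne_zero 2 (hNpos s).ne')).comp s h2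
    have hs0 : (0:ℝ) ≤ ‖x s - P n‖ := norm_nonneg _
    have : (fun u => Real.sqrt (‖x u - P n‖ ^ 2)) = N := by
      funext u; simp [hNdef, Real.sqrt_sq (norm_nonneg _)]
    rw [this] at hsq
    convert hsq using 1
    rw [Real.sqrt_sq hs0, real_inner_smul_left]
    have := (hNpos s).ne'
    field_simp [hNdef]
    simp only [hNdef] at this ⊢
    rw [mul_div_cancel_left₀ _ this]
  -- g s = exp(α s) * (N s - r n)
  set g : ℝ → ℝ := fun s => Real.exp (α * s) * (N s - r n) with hgdef
  have hg : ∀ s, HasDerivAt g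
      (Real.exp (α * s) * α * (N s - r n) + Real.exp (α * s) * ⟪(N s)⁻¹ • (x s - P n), x' s⟫) s := by
    intro s
    have he : HasDerivAt (fun u => Real.exp (α * u)) (Real.exp (α * s) * α) s := by
      exact ((Real.hasDerivAt_exp (α * s)).comp s ((hasDerivAt_id s).const_mul α)).congr_deriv (by ring)
    exact he.mul ((hN s).sub_const (r n))
  have hmono : MonotoneOn g (Set.Ici (0:ℝ)) := by
    apply monotoneOn_of_deriv_nonneg (convex_Ici 0)
    · exact fun s _ => ((hg s).continuousAt).continuousWithinAt
    · intro s _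
      exact ((hg s).differentiableAt).differentiableWithinAt
    · intro s hs
      rw [interior_Ici] at hs
      rw [(hg s).deriv]
      have h1 := hineq s (le_of_lt hs) n
      have h2 : 0 < Real.exp (α * s) := Real.exp_pos _
      nlinarith [h1, h2]
  have h00 : (0:ℝ) ≤ g 0 := by
    have h := h0 n
    simp only [hgdef, hNdef, mul_zero, Real.exp_zero, one_mul]
    linarith
  have := hmono (Set.self_mem_Ici) (Set.mem_Ici.mpr ht) ht
  have hgt : 0 ≤ g t := le_trans h00 this
  have hexp : 0 < Real.exp (α * t) := Real.exp_pos _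
  simp only [hgdef] at hgt
  show r n ≤ N t
  nlinarith [hgt, hexp]
end

section
/- Let h_q : ℝⁿ → ℝ be C¹ with ‖∇h_q(q)‖ ≤ C_h for all q, and suppose a trajectory q(t) has velocity q̇(t) = q̇_s(t) + ė(t) where the safe velocity satisfies ⟨∇h_q(q(t)), q̇_s(t)⟩ ≥ -α·h_q(q(t)) and the tracking error satisfies ‖ė(t)‖ ≤ (V(t))/k₁ with V(t) ≤ V(0)e^{-λt} and λ > α. If h_q(q(0)) ≥ V(0)/(α_e) where α_e = k₁(λ - α)/C_h, then h_q(q(t)) ≥ 0 for all t ≥ 0. -/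
open scoped RealInnerProductSpace

theorem stmt_12 {n : ℕ} (hq : EuclideanSpace ℝ (Fin n) → ℝ) (hhq : ContDiff ℝ 1 hq)
    (C_h k₁ lam α : ℝ) (hCh : 0 < C_h) (hk₁ : 0 < k₁) (hα : 0 < α) (hlam : α < lam)
    (hgrad : ∀ y : EuclideanSpace ℝ (Fin n), ‖gradient hq y‖ ≤ C_h)
    (q qs e : ℝ → EuclideanSpace ℝ (Fin n))
    (hq' : ∀ t : ℝ, HasDerivAt q (qs t + e t) t)
    (hsafe : ∀ t : ℝ, 0 ≤ t → -α * hq (q t) ≤ ⟪gradient hq (q t), qs t⟫)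
    (V : ℝ → ℝ) (hVnn : ∀ t : ℝ, 0 ≤ t → 0 ≤ V t)
    (herr : ∀ t : ℝ, 0 ≤ t → ‖e t‖ ≤ V t / k₁)
    (hVdecay : ∀ t : ℝ, 0 ≤ t → V t ≤ V 0 * Real.exp (-lam * t))
    (h0 : V 0 / (k₁ * (lam - α) / C_h) ≤ hq (q 0)) :
    ∀ t : ℝ, 0 ≤ t → 0 ≤ hq (q t) := by
  set C : ℝ := C_h * V 0 / (k₁ * (lam - α)) with hC
  have hla : 0 < lam - α := by linarith
  have hCnn : 0 ≤ C := by
    apply div_nonneg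
    · exact mul_nonneg hCh.le (hVnn 0 le_rfl)
    · positivity
  -- H and its derivative
  set H : ℝ → ℝ := fun t => hq (q t) with hH
  have hHd : ∀ t : ℝ, HasDerivAt H ⟪gradient hq (q t), qs t + e t⟫ t := by
    intro t
    have hdiff : DifferentiableAt ℝ hq (q t) := (hhq.differentiable one_ne_zero).differentiableAt
    have hg := hdiff.hasGradientAt.hasFDerivAt
    have := hg.comp_hasDerivAt t (hq' t)
    simpa [InnerProductSpace.toDual_apply_apply, hH, Function.comp_def] using this
  -- the auxiliary function
  set G : ℝ → ℝ := fun t => Real.exp (α * t) * (H t - C * Real.exp (-lam * t)) with hG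
  have hGd : ∀ t : ℝ, HasDerivAt G
      (α * Real.exp (α * t) * (H t - C * Real.exp (-lam * t)) +
        Real.exp (α * t) * (⟪gradient hq (q t), qs t + e t⟫ - C * (-lam * Real.exp (-lam * t)))) t := by
    intro t
    have h1 : HasDerivAt (fun t => Real.exp (α * t)) (α * Real.exp (α * t)) t := by
      simpa [mul_comm] using ((hasDerivAt_id t).const_mul α).exp
    have h2 : HasDerivAt (fun t => Real.exp (-lam * t)) (-lam * Real.exp (-lam * t)) t := by
      simpa [mul_comm] using ((hasDerivAt_id t).const_mul (-lam)).exp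
    exact h1.mul ((hHd t).sub (h2.const_mul C))
  -- derivative of G nonneg on [0,∞)
  have hGmono : MonotoneOn G (Set.Ici (0:ℝ)) := by
    apply monotoneOn_of_deriv_nonneg (convex_Ici 0)
    · exact (fun t _ => ((hGd t).differentiableAt).continuousAt.continuousWithinAt)
    · exact fun t _ => ((hGd t).differentiableAt).differentiableWithinAt
    · intro t ht
      rw [interior_Ici] at ht
      have ht0 : (0:ℝ) ≤ t := ht.le
      rw [(hGd t).deriv]
      have hkey : -α * H t - C * (lam - α) * Real.exp (-lam * t)
          ≤ ⟪gradient hq (q t), qs t + e t⟫ := by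
        rw [inner_add_right]
        have h1 := hsafe t ht0
        have h2 : -(C_h * (V t / k₁)) ≤ ⟪gradient hq (q t), e t⟫ := by
          have := abs_real_inner_le_norm (gradient hq (q t)) (e t)
          have hb : ‖gradient hq (q t)‖ * ‖e t‖ ≤ C_h * (V t / k₁) :=
            mul_le_mul (hgrad _) (herr t ht0) (norm_nonneg _) hCh.le
          nlinarith [abs_le.1 (this.trans hb)]
        have h3 : C_h * (V t / k₁) ≤ C * (lam - α) * Real.exp (-lam * t) := by
          have hv := hVdecay t ht0
          have : C * (lam - α) = C_h * V 0 / k₁ := by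
            rw [hC, div_mul_eq_mul_div, mul_div_mul_right _ _ hla.ne']
          rw [this]
          calc C_h * (V t / k₁) = C_h / k₁ * V t := by ring
            _ ≤ C_h / k₁ * (V 0 * Real.exp (-lam * t)) :=
                mul_le_mul_of_nonneg_left hv (div_nonneg hCh.le hk₁.le)
            _ = C_h * V 0 / k₁ * Real.exp (-lam * t) := by ring
        linarith
      have hexp : 0 < Real.exp (α * t) := Real.exp_pos _
      have : 0 ≤ Real.exp (α * t) *
          ((α * (H t - C * Real.exp (-lam * t))) +
            (⟪gradient hq (q t), qs t + e t⟫ - C * (-lam * Real.exp (-lam * t)))) := by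
        apply mul_nonneg hexp.le
        nlinarith [Real.exp_pos (-lam * t)]
      nlinarith
  -- conclude
  intro t ht
  have hG0 : 0 ≤ G 0 := by
    have hC0 : C = V 0 / (k₁ * (lam - α) / C_h) := by
      rw [hC, div_div_eq_mul_div]; ring
    simp only [hG, mul_zero, Real.exp_zero, one_mul]
    rw [hC0]
    linarith [h0]
  have := hGmono (Set.self_mem_Ici) (Set.mem_Ici.2 ht) ht
  have hGt : 0 ≤ G t := le_trans hG0 this
  have hexp : 0 < Real.exp (α * t) := Real.exp_pos _
  have h1 : 0 ≤ H t - C * Real.exp (-lam * t) := nonneg_of_mul_nonneg_right hGt hexp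
  have : 0 ≤ C * Real.exp (-lam * t) := mul_nonneg hCnn (Real.exp_pos _).le
  linarith
end

section
/- Under the hypotheses of the model-free CBF theorem, the composite function h_V(t) = -V(t) + α_e·h_q(q(t)) with α_e = k₁(λ - α)/C_h satisfies d/dt h_V(t) ≥ -α·h_V(t) whenever V̇ ≤ -λV, ⟨∇h_q(q), q̇_s⟩ ≥ -α h_q(q), ‖∇h_q(q)‖ ≤ C_h, and ‖ė‖ ≤ V/k₁. -/
open scoped RealInnerProductSpace

theorem stmt_13 {n : ℕ} (hq : EuclideanSpace ℝ (Fin n) → ℝ) (hhq : ContDiff ℝ 1 hq)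
    (C_h k₁ lam α : ℝ) (hCh : 0 < C_h) (hk₁ : 0 < k₁) (hα : 0 < α) (hlam : α < lam)
    (hgrad : ∀ y : EuclideanSpace ℝ (Fin n), ‖gradient hq y‖ ≤ C_h)
    (q qs e : ℝ → EuclideanSpace ℝ (Fin n))
    (hq' : ∀ t : ℝ, HasDerivAt q (qs t + e t) t)
    (V V' : ℝ → ℝ) (hV : ∀ t : ℝ, HasDerivAt V (V' t) t)
    (t : ℝ)
    (hVdecay : V' t ≤ -lam * V t)
    (hsafe : -α * hq (q t) ≤ ⟪gradient hq (q t), qs t⟫)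
    (herr : ‖e t‖ ≤ V t / k₁) :
    -α * (-V t + (k₁ * (lam - α) / C_h) * hq (q t)) ≤
      deriv (fun s => -V s + (k₁ * (lam - α) / C_h) * hq (q s)) t := by
  set c : ℝ := k₁ * (lam - α) / C_h with hc
  have hg : HasGradientAt hq (gradient hq (q t)) (q t) :=
    ((hhq.differentiable one_ne_zero) (q t)).hasGradientAt
  have hcomp : HasDerivAt (fun s => hq (q s)) ⟪gradient hq (q t), qs t + e t⟫ t := by
    simpa [Function.comp_def] using (hg.hasFDerivAt.comp_hasDerivAt t (hq' t))
  have hD : HasDerivAt (fun s => -V s + c * hq (q s))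
      (-V' t + c * ⟪gradient hq (q t), qs t + e t⟫) t :=
    ((hV t).neg).add (hcomp.const_mul c)
  rw [hD.deriv]
  have hVnn : 0 ≤ V t := by
    have h0 : (0:ℝ) ≤ V t / k₁ := (norm_nonneg (e t)).trans herr
    have := (div_nonneg_iff.mp h0)
    rcases this with ⟨h,_⟩|⟨_,h⟩
    · exact h
    · linarith
  have hinner : ⟪gradient hq (q t), qs t + e t⟫ =
      ⟪gradient hq (q t), qs t⟫ + ⟪gradient hq (q t), e t⟫ := inner_add_right _ _ _
  have he : -(C_h * (V t / k₁)) ≤ ⟪gradient hq (q t), e t⟫ := by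
    have h1 : |⟪gradient hq (q t), e t⟫| ≤ ‖gradient hq (q t)‖ * ‖e t‖ :=
      abs_real_inner_le_norm _ _
    have h2 : ‖gradient hq (q t)‖ * ‖e t‖ ≤ C_h * (V t / k₁) :=
      mul_le_mul (hgrad _) herr (norm_nonneg _) hCh.le
    nlinarith [neg_abs_le ⟪gradient hq (q t), e t⟫]
  have hla : (0:ℝ) < lam - α := by linarith
  have hcpos : 0 < c := by rw [hc]; positivity
  have hcC : c * C_h = k₁ * (lam - α) := by rw [hc]; field_simp
  rw [hinner]
  have hs : c * ⟪gradient hq (q t), qs t⟫ ≥ c * (-α * hq (q t)) :=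
    mul_le_mul_of_nonneg_left hsafe hcpos.le
  have he' : c * ⟪gradient hq (q t), e t⟫ ≥ c * (-(C_h * (V t / k₁))) :=
    mul_le_mul_of_nonneg_left he hcpos.le
  have hk : c * (C_h * (V t / k₁)) = (lam - α) * V t := by
    rw [hc]; field_simp
  nlinarith [hs, he']
end

section
/- Let P ∈ ℝ³ and 0 < r_in < r_out. Define h_in(x) = ‖x - P‖ - r_in and h_out(x) = r_out - ‖x - P‖, and the annular safe set A = {x | h_in(x) ≥ 0 and h_out(x) ≥ 0}. If a C¹ trajectory x(t) with x(t) ≠ P satisfies ⟨(x(t)-P)/‖x(t)-P‖, ẋ(t)⟩ ≥ -α·h_in(x(t)) and -⟨(x(t)-P)/‖x(t)-P‖, ẋ(t)⟩ ≥ -α·h_out(x(t)) for all t, and x(0) ∈ A, then x(t) ∈ A for all t ≥ 0. -/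
open scoped RealInnerProductSpace

theorem stmt_15 (P : EuclideanSpace ℝ (Fin 3)) (r_in r_out α : ℝ)
    (hrin : 0 < r_in) (hr : r_in < r_out) (hα : 0 < α)
    (x : ℝ → EuclideanSpace ℝ (Fin 3)) (x' : ℝ → EuclideanSpace ℝ (Fin 3))
    (hx : ∀ t : ℝ, HasDerivAt x (x' t) t) (hx' : Continuous x')
    (hne : ∀ t : ℝ, x t ≠ P)
    (hin : ∀ t : ℝ, 0 ≤ t →
      -α * (‖x t - P‖ - r_in) ≤ ⟪(‖x t - P‖⁻¹ • (x t - P)), x' t⟫)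
    (hout : ∀ t : ℝ, 0 ≤ t →
      -α * (r_out - ‖x t - P‖) ≤ -⟪(‖x t - P‖⁻¹ • (x t - P)), x' t⟫)
    (h0 : r_in ≤ ‖x 0 - P‖ ∧ ‖x 0 - P‖ ≤ r_out) :
    ∀ t : ℝ, 0 ≤ t → r_in ≤ ‖x t - P‖ ∧ ‖x t - P‖ ≤ r_out := by
  set g : ℝ → ℝ := fun t => ‖x t - P‖ with hg_def
  set g' : ℝ → ℝ := fun t => ⟪(‖x t - P‖⁻¹ • (x t - P)), x' t⟫ with hg'_def
  have hgpos : ∀ t, 0 < g t := fun t => by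
    simp only [hg_def, norm_pos_iff, sub_ne_zero]; exact hne t
  have hg : ∀ t, HasDerivAt g (g' t) t := by
    intro t
    have h1 : HasDerivAt (fun s => x s - P) (x' t) t := (hx t).sub_const P
    have h2 : HasDerivAt (fun s => ‖x s - P‖ ^ 2) (2 * ⟪x t - P, x' t⟫) t := h1.norm_sq
    have hne2 : ‖x t - P‖ ^ 2 ≠ 0 := pow_ne_zero _ (ne_of_gt (hgpos t))
    have h3 := h2.sqrt hne2
    have h4 : (fun y => Real.sqrt (‖x y - P‖ ^ 2)) = g := by
      funext y; simp [hg_def, Real.sqrt_sq (norm_nonneg _)]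
    have h5 : 2 * ⟪x t - P, x' t⟫ / (2 * Real.sqrt (‖x t - P‖ ^ 2)) = g' t := by
      rw [Real.sqrt_sq (norm_nonneg _), hg'_def]
      simp only [real_inner_smul_left]
      have hn : ‖x t - P‖ ≠ 0 := ne_of_gt (hgpos t)
      field_simp
    rw [h4, h5] at h3
    exact h3
  have he : ∀ s : ℝ, HasDerivAt (fun s => Real.exp (α * s)) (α * Real.exp (α * s)) s := by
    intro s
    simpa [mul_comm, Function.comp_def] using (Real.hasDerivAt_exp (α * s)).comp s
      ((hasDerivAt_id s).const_mul α)
  intro t ht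
  constructor
  · -- inner barrier
    set u : ℝ → ℝ := fun s => Real.exp (α * s) * (g s - r_in) with hu_def
    have hu : ∀ s, HasDerivAt u
        (α * Real.exp (α * s) * (g s - r_in) + Real.exp (α * s) * g' s) s :=
      fun s => (he s).mul ((hg s).sub_const r_in)
    have hmono : MonotoneOn u (Set.Ici (0 : ℝ)) := by
      apply monotoneOn_of_hasDerivWithinAt_nonneg (convex_Ici 0)
        (fun s _ => (hu s).continuousAt.continuousWithinAt)
        (fun s _ => (hu s).hasDerivWithinAt)
      intro s hs
      have hs0 : (0 : ℝ) ≤ s := le_of_lt (by simpa using hs)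
      have h1 : -α * (g s - r_in) ≤ g' s := hin s hs0
      nlinarith [Real.exp_pos (α * s)]
    have h00 : (0 : ℝ) ≤ u 0 := by
      have h1 := h0.1
      have h2 : (0:ℝ) < Real.exp (α * 0) := Real.exp_pos _
      have : (0:ℝ) ≤ g 0 - r_in := by simp only [hg_def]; linarith
      positivity
    have hut : u 0 ≤ u t := hmono (Set.self_mem_Ici) ht ht
    have hexp : (0:ℝ) < Real.exp (α * t) := Real.exp_pos _
    have h2 : 0 ≤ Real.exp (α * t) * (g t - r_in) := h00.trans hut
    nlinarith [h2, hexp]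
  · -- outer barrier
    set v : ℝ → ℝ := fun s => Real.exp (α * s) * (r_out - g s) with hv_def
    have hv : ∀ s, HasDerivAt v
        (α * Real.exp (α * s) * (r_out - g s) + Real.exp (α * s) * (-g' s)) s := by
      intro s
      have : HasDerivAt (fun s => r_out - g s) (-g' s) s := (hg s).const_sub r_out
      exact (he s).mul this
    have hmono : MonotoneOn v (Set.Ici (0 : ℝ)) := by
      apply monotoneOn_of_hasDerivWithinAt_nonneg (convex_Ici 0)
        (fun s _ => (hv s).continuousAt.continuousWithinAt)
        (fun s _ => (hv s).hasDerivWithinAt)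
      intro s hs
      have hs0 : (0 : ℝ) ≤ s := le_of_lt (by simpa using hs)
      have h1 : -α * (r_out - g s) ≤ -g' s := hout s hs0
      nlinarith [Real.exp_pos (α * s)]
    have h00 : (0 : ℝ) ≤ v 0 := by
      have h1 := h0.2
      have : (0:ℝ) ≤ r_out - g 0 := by simp only [hg_def]; linarith
      positivity
    have hvt : v 0 ≤ v t := hmono (Set.self_mem_Ici) ht ht
    have hexp : (0:ℝ) < Real.exp (α * t) := Real.exp_pos _
    have h2 : 0 ≤ Real.exp (α * t) * (r_out - g t) := h00.trans hvt
    nlinarith [h2, hexp]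
end
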